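/- Suppose (P) is continuous, x̂ ∈ S is an isolated efficient solution of (P), every constraint function g_t is continuously differentiable on a neighborhood of x̂, and the Mangasarian–Fromovitz constraint qualification (MFCQ) holds at x̂. Then the perturbed KKT condition holds at x̂. -/

import Mathlib

open Set Filter Topology
open scoped RealInnerProductSpace Pointwise

noncomputable section

namespace MOSIP

variable {n : ℕ} {T : Type*} {p : ℕ}

/-- The decision space `ℝ^n`. -/
abbrev Eucl (n : ℕ) := EuclideanSpace ℝ (Fin n)

/-- Subdifferential of a real-valued function. -/
def subdiff (h : Eucl n → ℝ) (x : Eucl n) : Set (Eucl n) :=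
  {ξ | ∀ y, h x + ⟪ξ, y - x⟫ ≤ h y}

/-- Subdifferential of an extended-real-valued function. -/
def subdiffE (h : Eucl n → EReal) (x : Eucl n) : Set (Eucl n) :=
  {ξ | ∀ y, h x + ((⟪ξ, y - x⟫ : ℝ) : EReal) ≤ h y}

/-- Convexity of an extended-real-valued function. -/
def ConvexE (h : Eucl n → EReal) : Prop :=
  ∀ x y : Eucl n, ∀ a b : ℝ, 0 ≤ a → 0 ≤ b → a + b = 1 →
    h (a • x + b • y) ≤ (a : EReal) * h x + (b : EReal) * h y

/-- Proper (with values in `ℝ ∪ {+∞}`): never `−∞` and not identically `+∞`. -/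
def ProperE (h : Eucl n → EReal) : Prop :=
  (∀ x, h x ≠ ⊥) ∧ (∃ x, h x ≠ ⊤)

/-- Feasible set `S` of the problem `(P)`. -/
def feasSet (g : T → Eucl n → EReal) : Set (Eucl n) := {x | ∀ t, g t x ≤ 0}

/-- Active indices `T(x)`. -/
def activeIx (g : T → Eucl n → EReal) (x : Eucl n) : Set T := {t | g t x = 0}

/-- `ε`-active indices `T_ε(x)`. -/
def activeIxEps (g : T → Eucl n → EReal) (x : Eucl n) (ε : ℝ) : Set T :=
  {t | ((-ε : ℝ) : EReal) ≤ g t x}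

/-- `F(xh) = ⋃ i, ∂f_i(xh)`. -/
def FSet (f : Fin p → Eucl n → ℝ) (x : Eucl n) : Set (Eucl n) := ⋃ i, subdiff (f i) x

/-- `G(xh) = ⋃_{t ∈ T(xh)} ∂g_t(xh)`. -/
def GSet (g : T → Eucl n → EReal) (x : Eucl n) : Set (Eucl n) :=
  ⋃ t ∈ activeIx g x, subdiffE (g t) x

/-- The smallest convex cone containing `M` and `0`: all finite nonnegative combinations. -/
def coneHull (M : Set (Eucl n)) : Set (Eucl n) :=
  {x | ∃ (s : Finset (Eucl n)) (c : Eucl n → ℝ), ↑s ⊆ M ∧ (∀ v ∈ s, 0 ≤ c v) ∧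
    x = ∑ v ∈ s, c v • v}

/-- Negative polar cone `M⁰`. -/
def negPolar (M : Set (Eucl n)) : Set (Eucl n) := {d | ∀ ξ ∈ M, ⟪ξ, d⟫ ≤ 0}

/-- Strictly negative polar cone `M⁻`. -/
def strictNegPolar (M : Set (Eucl n)) : Set (Eucl n) := {d | ∀ ξ ∈ M, ⟪ξ, d⟫ < 0}

/-- Contingent (Bouligand tangent) cone of `M` at `x`. -/
def contingentCone (M : Set (Eucl n)) (x : Eucl n) : Set (Eucl n) :=
  {v | ∃ (τ : ℕ → ℝ) (w : ℕ → Eucl n), (∀ r, 0 < τ r) ∧ Tendsto τ atTop (𝓝 0) ∧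
    Tendsto w atTop (𝓝 v) ∧ ∀ r, x + τ r • w r ∈ M}

/-- Normal cone `N(M, x) := C(M, x)⁰`. -/
def normalCone (M : Set (Eucl n)) (x : Eucl n) : Set (Eucl n) :=
  negPolar (contingentCone M x)

/-- Weak efficient solution. -/
def WeakEff (f : Fin p → Eucl n → ℝ) (S : Set (Eucl n)) (xh : Eucl n) : Prop :=
  ¬ ∃ x ∈ S, ∀ i, f i x < f i xh

/-- Efficient solution. -/
def Eff (f : Fin p → Eucl n → ℝ) (S : Set (Eucl n)) (xh : Eucl n) : Prop :=
  ¬ ∃ x ∈ S, (∀ i, f i x ≤ f i xh) ∧ ∃ j, f j x < f j xh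

/-- Isolated efficient solution with constant `ν`:
`max_i (f_i(x) − f_i(xh)) ≥ ν‖x − xh‖` on `S`. -/
def IsolatedEff (f : Fin p → Eucl n → ℝ) (S : Set (Eucl n)) (xh : Eucl n) (ν : ℝ) : Prop :=
  ∀ x ∈ S, ∃ i, ν * ‖x - xh‖ ≤ f i x - f i xh

/-- `w ∈ Σ α_i ∂f_i(xh) + Σ_{t ∈ T*} β_t ∂g_t(xh)` with multipliers as described,
where `Nonneg`/`Pos` refers to the sign condition on the `α_i`. -/
def KKTPoint (f : Fin p → Eucl n → ℝ) (g : T → Eucl n → EReal) (xh : Eucl n)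
    (w : Eucl n) : Prop :=
  ∃ (α : Fin p → ℝ) (Ts : Finset T) (β : T → ℝ) (ξ : Fin p → Eucl n) (ζ : T → Eucl n),
    (∀ i, 0 ≤ α i) ∧ ∑ i, α i = 1 ∧ (∀ t ∈ Ts, t ∈ activeIx g xh) ∧
    (∀ t ∈ Ts, 0 ≤ β t) ∧ (∀ i, ξ i ∈ subdiff (f i) xh) ∧
    (∀ t ∈ Ts, ζ t ∈ subdiffE (g t) xh) ∧
    ∑ i, α i • ξ i + ∑ t ∈ Ts, β t • ζ t = w

/-- The weak KKT condition at `xh`. -/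
def WeakKKT (f : Fin p → Eucl n → ℝ) (g : T → Eucl n → EReal) (xh : Eucl n) : Prop :=
  KKTPoint f g xh 0

/-- The strong KKT condition at `xh` (all objective multipliers positive). -/
def StrongKKT (f : Fin p → Eucl n → ℝ) (g : T → Eucl n → EReal) (xh : Eucl n) : Prop :=
  ∃ (α : Fin p → ℝ) (Ts : Finset T) (β : T → ℝ) (ξ : Fin p → Eucl n) (ζ : T → Eucl n),
    (∀ i, 0 < α i) ∧ ∑ i, α i = 1 ∧ (∀ t ∈ Ts, t ∈ activeIx g xh) ∧
    (∀ t ∈ Ts, 0 ≤ β t) ∧ (∀ i, ξ i ∈ subdiff (f i) xh) ∧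
    (∀ t ∈ Ts, ζ t ∈ subdiffE (g t) xh) ∧
    ∑ i, α i • ξ i + ∑ t ∈ Ts, β t • ζ t = 0

/-- The perturbed KKT condition at `xh` with constant `ν`. -/
def PerturbedKKT (f : Fin p → Eucl n → ℝ) (g : T → Eucl n → EReal) (xh : Eucl n)
    (ν : ℝ) : Prop :=
  ∀ w : Eucl n, ‖w‖ ≤ ν → KKTPoint f g xh w

/-- The gap function `ϑ(x, ξ, λ) = sup_{y ∈ S} Σ_i λ_i ⟪ξ_i, x − y⟫`. -/
def gapFn (S : Set (Eucl n)) (x : Eucl n) (ξ : Fin p → Eucl n) (lam : Fin p → ℝ) : EReal :=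
  ⨆ y ∈ S, ((∑ i, lam i * ⟪ξ i, x - y⟫ : ℝ) : EReal)

/-- The unit simplex of multipliers. -/
def simplex (lam : Fin p → ℝ) : Prop := (∀ i, 0 ≤ lam i) ∧ ∑ i, lam i = 1

/-- Supremum (marginal) function `ψ(x) = sup_t g_t(x)`. -/
def supFn (g : T → Eucl n → EReal) (x : Eucl n) : EReal := ⨆ t, g t x

/-- Directional derivative of a convex extended-real-valued function,
`h'(x; d) = inf_{τ > 0} (h(x + τ d) − h(x))/τ` (the limit as `τ ↓ 0`). -/
def dirDeriv (h : Eucl n → EReal) (x d : Eucl n) : EReal :=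
  ⨅ τ ∈ Ioi (0 : ℝ), (h (x + τ • d) - h x) * ((τ⁻¹ : ℝ) : EReal)

/-- Every constraint is (real-valued and) continuously differentiable around `xh`,
with gradient `gr t` at `xh`. -/
def SmoothConstraintsAt (g : T → Eucl n → EReal) (gr : T → Eucl n) (xh : Eucl n) : Prop :=
  ∀ t, ∃ (h : Eucl n → ℝ) (U : Set (Eucl n)), U ∈ 𝓝 xh ∧ (∀ y ∈ U, g t y = (h y : EReal)) ∧
    ContDiffOn ℝ 1 h U ∧ gradient h xh = gr t

/-- Slater CQ. -/
def SCQ (g : T → Eucl n → EReal) : Prop := ∃ x₀ : Eucl n, ∀ t, g t x₀ < 0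

/-- Mangasarian–Fromovitz CQ at `xh`. -/
def MFCQ (g : T → Eucl n → EReal) (xh : Eucl n) : Prop :=
  (GSet g xh).Nonempty ∧ (strictNegPolar (GSet g xh)).Nonempty

/-- Perturbed Mangasarian–Fromovitz CQ at `xh`. -/
def PMFCQ (g : T → Eucl n → EReal) (xh : Eucl n) : Prop :=
  ∃ xs : Eucl n,
    (⨅ ε ∈ Ioi (0 : ℝ), ⨆ ξ ∈ ⋃ t ∈ activeIxEps g xh ε, subdiffE (g t) xh,
      ((⟪ξ, xs⟫ : ℝ) : EReal)) < 0

/-- Local Farkas–Minkowski CQ at `xh`. -/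
def LFMCQ (g : T → Eucl n → EReal) (xh : Eucl n) : Prop :=
  normalCone (feasSet g) xh = coneHull (GSet g xh)

/-- Closed cone CQ at `xh`. -/
def CCCQ (g : T → Eucl n → EReal) (xh : Eucl n) : Prop :=
  IsClosed (coneHull (GSet g xh))

/-- Abadie CQ at `xh`. -/
def ACQ (g : T → Eucl n → EReal) (xh : Eucl n) : Prop :=
  (GSet g xh).Nonempty ∧ negPolar (GSet g xh) ⊆ contingentCone (feasSet g) xh

/-- Kuhn–Tucker CQ at `xh`. -/
def KTCQ (g : T → Eucl n → EReal) (xh : Eucl n) : Prop :=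
  {d | dirDeriv (supFn g) xh d ≤ 0} ⊆ contingentCone (feasSet g) xh

/-- Pshenichnyi–Levin–Valadier CQ at `xh`. -/
def PLVCQ (g : T → Eucl n → EReal) (xh : Eucl n) : Prop :=
  subdiffE (supFn g) xh ⊆ coneHull (GSet g xh)

/-- Weak Abadie DQ at `xh`. -/
def WADQ (f : Fin p → Eucl n → ℝ) (g : T → Eucl n → EReal) (xh : Eucl n) : Prop :=
  (GSet g xh).Nonempty ∧
    strictNegPolar (FSet f xh) ∩ negPolar (GSet g xh) ⊆ contingentCone (feasSet g) xh

/-- The sublevel sets `Q^i(xh)`. -/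
def QSet (f : Fin p → Eucl n → ℝ) (S : Set (Eucl n)) (xh : Eucl n) (i : Fin p) :
    Set (Eucl n) :=
  {x ∈ S | ∀ l, l ≠ i → f l x ≤ f l xh}

/-- Extended Abadie DQ at `xh`. -/
def EADQ (f : Fin p → Eucl n → ℝ) (g : T → Eucl n → EReal) (xh : Eucl n) : Prop :=
  (GSet g xh).Nonempty ∧
    negPolar (FSet f xh) ∩ negPolar (GSet g xh) ⊆
      ⋂ i, contingentCone (QSet f (feasSet g) xh i) xh

/-- Maeda objective qualification at `xh`. -/
def MOQ (f : Fin p → Eucl n → ℝ) (xh : Eucl n) : Prop :=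
  negPolar (FSet f xh) ⊆ {0} ∪ ⋃ i, strictNegPolar (subdiff (f i) xh)

/-! ### Auxiliary development -/

section AuxSlope

variable {n : ℕ}

/-- The difference quotient (slope) of `f` at `x` in direction `u`. -/
def slp (f : Eucl n → ℝ) (x u : Eucl n) (t : ℝ) : ℝ := (f (x + t • u) - f x) / t

lemma combo_pt (x u : Eucl n) {s t : ℝ} (hs : 0 < s) (hst : s ≤ t) :
    x + s • u = (1 - s / t) • x + (s / t) • (x + t • u) := by
  have ht : (0:ℝ) < t := lt_of_lt_of_le hs hst
  rw [smul_add, smul_smul, div_mul_cancel₀ _ ht.ne']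
  module

lemma slp_mono {f : Eucl n → ℝ} (hf : ConvexOn ℝ Set.univ f) (x u : Eucl n)
    {s t : ℝ} (hs : 0 < s) (hst : s ≤ t) : slp f x u s ≤ slp f x u t := by
  have ht : (0:ℝ) < t := lt_of_lt_of_le hs hst
  have hd : 0 ≤ s / t := div_nonneg hs.le ht.le
  have hd1 : s / t ≤ 1 := (div_le_one ht).2 hst
  have hcv := hf.2 (Set.mem_univ x) (Set.mem_univ (x + t • u))
    (by linarith : (0:ℝ) ≤ 1 - s / t) hd (by ring)
  rw [← combo_pt x u hs hst] at hcv
  simp only [smul_eq_mul] at hcv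
  rw [slp, slp, div_le_div_iff₀ hs ht]
  have hts : s / t * t = s := div_mul_cancel₀ _ ht.ne'
  have hcv' := mul_le_mul_of_nonneg_right hcv ht.le
  have e2 : ((1 - s / t) * f x + s / t * f (x + t • u)) * t
      = f x * t + (s / t * t) * (f (x + t • u) - f x) := by ring
  rw [hts] at e2
  rw [e2] at hcv'
  linarith

lemma slp_add_neg {f : Eucl n → ℝ} (hf : ConvexOn ℝ Set.univ f) (x u : Eucl n)
    {t : ℝ} (ht : 0 < t) : 0 ≤ slp f x u t + slp f x (-u) t := by
  have hcv := hf.2 (Set.mem_univ (x + t • u)) (Set.mem_univ (x + t • (-u)))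
    (by norm_num : (0:ℝ) ≤ 1/2) (by norm_num : (0:ℝ) ≤ 1/2) (by norm_num)
  have hx : (1/2 : ℝ) • (x + t • u) + (1/2 : ℝ) • (x + t • (-u)) = x := by module
  rw [hx] at hcv
  simp only [smul_eq_mul] at hcv
  rw [slp, slp]
  have h2 : 0 ≤ (f (x + t • u) - f x) + (f (x + t • (-u)) - f x) := by linarith
  have := div_nonneg h2 ht.le
  rw [add_div] at this
  linarith

lemma slp_lb {f : Eucl n → ℝ} (hf : ConvexOn ℝ Set.univ f) (x u : Eucl n)
    {t : ℝ} (ht : 0 < t) : f x - f (x - u) ≤ slp f x u t := by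
  have key : ∀ {s : ℝ}, 0 < s → s ≤ 1 → f x - f (x - u) ≤ slp f x u s := by
    intro s hs hs1
    have h1 := slp_add_neg hf x u hs
    have h2 := slp_mono hf x (-u) hs hs1
    have h3 : slp f x (-u) 1 = f (x - u) - f x := by
      rw [slp]; simp [sub_eq_add_neg]
    linarith
  rcases le_or_gt t 1 with h | h
  · exact key ht h
  · exact (key one_pos le_rfl).trans (slp_mono hf x u one_pos h.le)

/-- Directional derivative of a convex function: infimum of slopes. -/
def ddf (f : Eucl n → ℝ) (x u : Eucl n) : ℝ := sInf (slp f x u '' Set.Ioi 0)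

lemma ddf_bddBelow {f : Eucl n → ℝ} (hf : ConvexOn ℝ Set.univ f) (x u : Eucl n) :
    BddBelow (slp f x u '' Set.Ioi 0) := by
  refine ⟨f x - f (x - u), ?_⟩
  rintro r ⟨t, ht, rfl⟩
  exact slp_lb hf x u ht

lemma ddf_le_slp {f : Eucl n → ℝ} (hf : ConvexOn ℝ Set.univ f) (x u : Eucl n)
    {t : ℝ} (ht : 0 < t) : ddf f x u ≤ slp f x u t :=
  csInf_le (ddf_bddBelow hf x u) ⟨t, ht, rfl⟩

lemma le_ddf {f : Eucl n → ℝ} (x u : Eucl n) {c : ℝ}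
    (h : ∀ t : ℝ, 0 < t → c ≤ slp f x u t) : c ≤ ddf f x u :=
  le_csInf ⟨slp f x u 1, 1, Set.mem_Ioi.2 one_pos, rfl⟩ (by rintro r ⟨t, ht, rfl⟩; exact h t ht)

lemma ddf_zero (f : Eucl n → ℝ) (x : Eucl n) : ddf f x 0 = 0 := by
  have h : slp f x 0 '' Set.Ioi 0 = {0} := by
    apply Set.eq_singleton_iff_nonempty_unique_mem.2
    constructor
    · exact ⟨slp f x 0 1, 1, Set.mem_Ioi.2 one_pos, rfl⟩
    · rintro r ⟨t, ht, rfl⟩; simp [slp]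
  rw [ddf, h, csInf_singleton]

lemma slp_smul (f : Eucl n → ℝ) (x u : Eucl n) {c t : ℝ} (hc : 0 < c) (_ht : 0 < t) :
    slp f x (c • u) t = c * slp f x u (t * c) := by
  rw [slp, slp, smul_smul]
  have htc : t * c ≠ 0 := by positivity
  field_simp

lemma ddf_smul {f : Eucl n → ℝ} (hf : ConvexOn ℝ Set.univ f) (x u : Eucl n)
    {c : ℝ} (hc : 0 < c) : ddf f x (c • u) = c * ddf f x u := by
  have himg : slp f x (c • u) '' Set.Ioi 0 = c • (slp f x u '' Set.Ioi 0) := by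
    ext r
    constructor
    · rintro ⟨t, ht, rfl⟩
      have ht' : (0:ℝ) < t := ht
      refine ⟨slp f x u (t * c), ⟨t * c, Set.mem_Ioi.2 (by positivity), rfl⟩, ?_⟩
      show c • slp f x u (t * c) = _
      rw [smul_eq_mul]
      exact (slp_smul f x u hc ht').symm
    · rintro ⟨r', ⟨t, ht, rfl⟩, rfl⟩
      have ht' : (0:ℝ) < t := ht
      refine ⟨t / c, Set.mem_Ioi.2 (by positivity), ?_⟩
      show _ = c • slp f x u t
      rw [slp_smul f x u hc (by positivity), div_mul_cancel₀ _ hc.ne', smul_eq_mul]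
  rw [ddf, himg, ddf, Real.sInf_smul_of_nonneg hc.le, smul_eq_mul]

lemma ddf_add {f : Eucl n → ℝ} (hf : ConvexOn ℝ Set.univ f) (x u v : Eucl n) :
    ddf f x (u + v) ≤ ddf f x u + ddf f x v := by
  have key : ∀ t : ℝ, 0 < t → slp f x (u + v) (t / 2) ≤ slp f x u t + slp f x v t := by
    intro t ht
    have hcv := hf.2 (Set.mem_univ (x + t • u)) (Set.mem_univ (x + t • v))
      (by norm_num : (0:ℝ) ≤ 1/2) (by norm_num : (0:ℝ) ≤ 1/2) (by norm_num)
    have hx : (1/2 : ℝ) • (x + t • u) + (1/2 : ℝ) • (x + t • v) = x + (t/2) • (u + v) := by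
      module
    rw [hx] at hcv
    simp only [smul_eq_mul] at hcv
    rw [slp, slp, slp, ← add_div, div_le_div_iff₀ (by positivity : (0:ℝ) < t/2) ht]
    nlinarith
  refine le_of_forall_pos_le_add ?_
  intro ε hε
  obtain ⟨r₁, ⟨t₁, ht₁, rfl⟩, h₁⟩ :=
    exists_lt_of_csInf_lt (⟨slp f x u 1, 1, Set.mem_Ioi.2 one_pos, rfl⟩ : (slp f x u '' Set.Ioi 0).Nonempty)
      (lt_add_of_pos_right (ddf f x u) (half_pos hε))
  obtain ⟨r₂, ⟨t₂, ht₂, rfl⟩, h₂⟩ :=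
    exists_lt_of_csInf_lt (⟨slp f x v 1, 1, Set.mem_Ioi.2 one_pos, rfl⟩ : (slp f x v '' Set.Ioi 0).Nonempty)
      (lt_add_of_pos_right (ddf f x v) (half_pos hε))
  set t := min t₁ t₂ with htd
  have ht : 0 < t := lt_min ht₁ ht₂
  have c1 : slp f x u t ≤ slp f x u t₁ := slp_mono hf x u ht (min_le_left _ _)
  have c2 : slp f x v t ≤ slp f x v t₂ := slp_mono hf x v ht (min_le_right _ _)
  have c3 : ddf f x (u + v) ≤ slp f x (u + v) (t / 2) := ddf_le_slp hf x _ (by positivity)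
  have c4 := key t ht
  linarith

/-- Existence of a subgradient attaining at least the directional derivative. -/
lemma exists_subgrad {f : Eucl n → ℝ} (hf : ConvexOn ℝ Set.univ f) (x u : Eucl n) :
    ∃ ξ ∈ subdiff f x, ddf f x u ≤ ⟪ξ, u⟫ := by
  have hmain : ∀ v : Eucl n, v ≠ 0 → ∃ ξ ∈ subdiff f x, ddf f x v ≤ ⟪ξ, v⟫ := by
    intro v hv
    let pl : Eucl n →ₗ.[ℝ] ℝ := LinearPMap.mkSpanSingleton v (ddf f x v) hv
    have hdom : ∀ z : pl.domain, pl z ≤ ddf f x z := by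
      rintro ⟨z, hz⟩
      obtain ⟨c, rfl⟩ := Submodule.mem_span_singleton.1 hz
      show LinearPMap.mkSpanSingleton' v (ddf f x v) _ ⟨c • v, hz⟩ ≤ _
      rw [LinearPMap.mkSpanSingleton'_apply]
      rcases lt_trichotomy c 0 with hc | hc | hc
      · have h1 := ddf_add hf x (c • v) ((-c) • v)
        have h2 : c • v + (-c) • v = 0 := by module
        rw [h2, ddf_zero, ddf_smul hf x v (by linarith : 0 < -c)] at h1
        simp only [smul_eq_mul, RingHom.id_apply]
        linarith
      · subst hc; simp [ddf_zero]
      · rw [ddf_smul hf x v hc]; simp [smul_eq_mul]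
    obtain ⟨G, hG1, hG2⟩ := exists_extension_of_le_sublinear pl (ddf f x)
      (fun c hc w => ddf_smul hf x w hc) (fun a b => ddf_add hf x a b) hdom
    set ξ : Eucl n := (InnerProductSpace.toDual ℝ (Eucl n)).symm
      (LinearMap.toContinuousLinearMap G) with hξ
    have hip : ∀ w : Eucl n, ⟪ξ, w⟫ = G w := fun w =>
      InnerProductSpace.toDual_symm_apply
    refine ⟨ξ, ?_, ?_⟩
    · intro y
      have h1 : G (y - x) ≤ ddf f x (y - x) := hG2 (y - x)
      have h2 : ddf f x (y - x) ≤ slp f x (y - x) 1 := ddf_le_slp hf x _ one_pos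
      have h3 : slp f x (y - x) 1 = f y - f x := by rw [slp]; simp
      rw [hip]
      linarith
    · have hv1 : v ∈ pl.domain := Submodule.mem_span_singleton_self v
      have h4 := hG1 ⟨v, hv1⟩
      have hplv : pl ⟨v, hv1⟩ = ddf f x v :=
        LinearPMap.mkSpanSingleton'_apply_self _ _ _ _
      rw [hip, h4, hplv]
  by_cases hu : u = 0
  · subst hu
    by_cases hex : ∃ v : Eucl n, v ≠ 0
    · obtain ⟨v, hv⟩ := hex
      obtain ⟨ξ, hξ, -⟩ := hmain v hv
      exact ⟨ξ, hξ, by rw [ddf_zero]; simp⟩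
    · push_neg at hex
      refine ⟨0, ?_, by rw [ddf_zero]; simp⟩
      intro y
      have : y - x = 0 := hex _
      have hyx : y = x := by rwa [sub_eq_zero] at this
      simp [hyx]
  · exact hmain u hu

end AuxSlope
section AuxGrad

variable {n : ℕ}

lemma hasDerivAt_line (x u : Eucl n) (τ : ℝ) :
    HasDerivAt (fun s : ℝ => x + s • u) u τ := by
  simpa using ((hasDerivAt_id τ).smul_const u).const_add x

lemma slope_tendsto_inner {h : Eucl n → ℝ} {x : Eucl n} (hd : DifferentiableAt ℝ h x)
    (u : Eucl n) :
    Tendsto (fun τ : ℝ => (h (x + τ • u) - h x) / τ) (𝓝[>] (0:ℝ))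
      (𝓝 ⟪gradient h x, u⟫) := by
  have hg : HasGradientAt h (gradient h x) x := hd.hasGradientAt
  have hfd : HasFDerivAt h ((InnerProductSpace.toDual ℝ (Eucl n)) (gradient h x)) x :=
    hasGradientAt_iff_hasFDerivAt.1 hg
  have hfd' : HasFDerivAt h ((InnerProductSpace.toDual ℝ (Eucl n)) (gradient h x))
      (x + (0:ℝ) • u) := by simpa using hfd
  have hline : HasDerivAt (fun τ : ℝ => h (x + τ • u)) ⟪gradient h x, u⟫ 0 := by
    have := hfd'.comp_hasDerivAt 0 (hasDerivAt_line x u 0)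
    simpa [InnerProductSpace.toDual_apply_apply, Function.comp_def] using this
  have key := (hasDerivAt_iff_tendsto_slope.1 hline).mono_left
    (nhdsWithin_mono 0 (fun τ (hτ : τ ∈ Set.Ioi (0:ℝ)) => ne_of_gt hτ))
  refine key.congr (fun τ => ?_)
  simp [slope_def_field, div_eq_mul_inv]

lemma grad_mem_subdiff {h : Eucl n → ℝ} (hcv : ConvexOn ℝ Set.univ h) {x : Eucl n}
    (hd : DifferentiableAt ℝ h x) : gradient h x ∈ subdiff h x := by
  intro y
  have ht := slope_tendsto_inner hd (y - x)
  have hmem : Set.Ioo (0:ℝ) 1 ∈ 𝓝[>] (0:ℝ) :=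
    Ioo_mem_nhdsGT_of_mem (by constructor <;> norm_num)
  have hle : ∀ᶠ τ in 𝓝[>] (0:ℝ),
      (h (x + τ • (y - x)) - h x) / τ ≤ slp h x (y - x) 1 := by
    filter_upwards [hmem] with τ hτ
    exact slp_mono hcv x (y - x) hτ.1 hτ.2.le
  have hlim : ⟪gradient h x, y - x⟫ ≤ slp h x (y - x) 1 := le_of_tendsto ht hle
  have : slp h x (y - x) 1 = h y - h x := by simp [slp]
  linarith

lemma grad_nonneg_of_slopes {h : Eucl n → ℝ} {x : Eucl n} (hd : DifferentiableAt ℝ h x)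
    (u : Eucl n) (hs : ∀ τ : ℝ, 0 < τ → 0 ≤ (h (x + τ • u) - h x) / τ) :
    0 ≤ ⟪gradient h x, u⟫ := by
  refine ge_of_tendsto (slope_tendsto_inner hd u) ?_
  filter_upwards [self_mem_nhdsWithin] with τ hτ
  exact hs τ hτ

lemma subdiff_convex (f : Eucl n → ℝ) (x : Eucl n) : Convex ℝ (subdiff f x) := by
  intro ξ₁ h₁ ξ₂ h₂ a b ha hb hab y
  have e : ⟪a • ξ₁ + b • ξ₂, y - x⟫ = a * ⟪ξ₁, y - x⟫ + b * ⟪ξ₂, y - x⟫ := by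
    rw [inner_add_left, real_inner_smul_left, real_inner_smul_left]
  have e₁ := mul_le_mul_of_nonneg_left (h₁ y) ha
  have e₂ := mul_le_mul_of_nonneg_left (h₂ y) hb
  have h3 : a * f x + b * f x = f x := by rw [← add_mul, hab, one_mul]
  have h4 : a * f y + b * f y = f y := by rw [← add_mul, hab, one_mul]
  rw [e]; linarith [e₁, e₂]

end AuxGrad

section AuxEReal

variable {n : ℕ} {T : Type*}

lemma subdiffE_eq_subdiff (g : T → Eucl n → EReal) (gR : T → Eucl n → ℝ)
    (hgR : ∀ t x, g t x = ((gR t x : ℝ) : EReal)) (t : T) (x : Eucl n) :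
    subdiffE (g t) x = subdiff (gR t) x := by
  ext ζ
  simp only [subdiffE, subdiff, Set.mem_setOf_eq, hgR, ← EReal.coe_add, EReal.coe_le_coe_iff]

lemma gR_convexOn (g : T → Eucl n → EReal) (gR : T → Eucl n → ℝ)
    (hgR : ∀ t x, g t x = ((gR t x : ℝ) : EReal)) (hgconv : ∀ t, ConvexE (g t)) (t : T) :
    ConvexOn ℝ Set.univ (gR t) := by
  refine ⟨convex_univ, fun x _ y _ a b ha hb hab => ?_⟩
  have h := hgconv t x y a b ha hb hab
  rw [hgR, hgR, hgR, ← EReal.coe_mul, ← EReal.coe_mul, ← EReal.coe_add,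
    EReal.coe_le_coe_iff] at h
  simpa [smul_eq_mul] using h

lemma mem_feasSet_iff (g : T → Eucl n → EReal) (gR : T → Eucl n → ℝ)
    (hgR : ∀ t x, g t x = ((gR t x : ℝ) : EReal)) (x : Eucl n) :
    x ∈ feasSet g ↔ ∀ t, gR t x ≤ 0 := by
  simp only [feasSet, Set.mem_setOf_eq, hgR]
  constructor <;> intro h t <;> have := h t
  · exact_mod_cast this
  · exact_mod_cast this

lemma mem_activeIx_iff (g : T → Eucl n → EReal) (gR : T → Eucl n → ℝ)
    (hgR : ∀ t x, g t x = ((gR t x : ℝ) : EReal)) (t : T) (x : Eucl n) :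
    t ∈ activeIx g x ↔ gR t x = 0 := by
  simp only [activeIx, Set.mem_setOf_eq, hgR]
  exact_mod_cast Iff.rfl

end AuxEReal
section AuxFeas

variable {n : ℕ} {T : Type*} [TopologicalSpace T] [CompactSpace T]

lemma feas_dir (g : T → Eucl n → EReal) (gR : T → Eucl n → ℝ)
    (hgR : ∀ t x, g t x = ((gR t x : ℝ) : EReal)) (hgconv : ∀ t, ConvexE (g t))
    (hcont : Continuous fun q : T × Eucl n => gR q.1 q.2)
    (xh : Eucl n) (hxS : xh ∈ feasSet g)
    (hdiff : ∀ t, DifferentiableAt ℝ (gR t) xh)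
    (u : Eucl n) (hu : ∀ t, gR t xh = 0 → ⟪gradient (gR t) xh, u⟫ < 0) :
    ∃ τ₀ : ℝ, 0 < τ₀ ∧ ∀ τ : ℝ, 0 < τ → τ ≤ τ₀ → xh + τ • u ∈ feasSet g := by
  have hfeas : ∀ t, gR t xh ≤ 0 := (mem_feasSet_iff g gR hgR xh).1 hxS
  by_contra hcon
  push_neg at hcon
  have mono : ∀ (t : T) {s t' : ℝ}, 0 < s → s ≤ t' → 0 ≤ gR t (xh + s • u) →
      0 ≤ gR t (xh + t' • u) := by
    intro t s t' hs hst hval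
    have ht' : (0:ℝ) < t' := lt_of_lt_of_le hs hst
    have hlam : (0:ℝ) < s / t' := by positivity
    have hlam1 : s / t' ≤ 1 := (div_le_one ht').2 hst
    have hcv := (gR_convexOn g gR hgR hgconv t).2 (Set.mem_univ xh)
      (Set.mem_univ (xh + t' • u)) (by linarith : (0:ℝ) ≤ 1 - s / t') hlam.le (by ring)
    rw [← combo_pt xh u hs hst] at hcv
    simp only [smul_eq_mul] at hcv
    by_contra hv
    push_neg at hv
    have h1 : 0 ≤ (s / t') * gR t (xh + t' • u) := by
      nlinarith [hfeas t]
    have h2 : (s / t') * gR t (xh + t' • u) < 0 := mul_neg_of_pos_of_neg hlam hv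
    linarith
  set K : ℕ → Set T := fun k => {t | 0 ≤ gR t (xh + ((1:ℝ)/(k+1)) • u)} with hK
  have hCt : ∀ z : Eucl n, Continuous fun t : T => gR t z := fun z =>
    hcont.comp (continuous_id.prodMk continuous_const)
  have hKcl : ∀ k, IsClosed (K k) := fun k =>
    isClosed_le continuous_const (hCt _)
  have hKne : ∀ k, (K k).Nonempty := by
    intro k
    have hkpos : (0:ℝ) < 1/(k+1) := by positivity
    obtain ⟨τ, hτ0, hτle, hτnf⟩ := hcon (1/(k+1)) hkpos
    rw [mem_feasSet_iff g gR hgR] at hτnf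
    push_neg at hτnf
    obtain ⟨t, ht⟩ := hτnf
    exact ⟨t, mono t hτ0 hτle ht.le⟩
  have hKanti : ∀ k, K (k+1) ⊆ K k := by
    intro k t ht
    have h1 : (0:ℝ) < 1/((k+1 : ℕ)+1) := by positivity
    have h2 : (1:ℝ)/((k+1 : ℕ)+1) ≤ 1/(k+1) := by
      apply one_div_le_one_div_of_le (by positivity)
      push_cast; linarith
    exact mono t h1 h2 ht
  obtain ⟨ts, hts⟩ := IsCompact.nonempty_iInter_of_sequence_nonempty_isCompact_isClosed
    K hKanti hKne ((hKcl 0).isCompact) hKcl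
  have hstar : ∀ τ : ℝ, 0 < τ → 0 ≤ gR ts (xh + τ • u) := by
    intro τ hτ
    obtain ⟨k, hk⟩ := exists_nat_ge (1/τ)
    have hk1 : (1:ℝ)/(k+1) ≤ τ := by
      rw [div_le_iff₀ (by positivity)]
      rw [div_le_iff₀ hτ] at hk
      nlinarith
    have htsk : ts ∈ K k := Set.mem_iInter.1 hts k
    exact mono ts (by positivity) hk1 htsk
  have hzero : gR ts xh = 0 := by
    refine le_antisymm (hfeas ts) ?_
    have hlim : Tendsto (fun τ : ℝ => gR ts (xh + τ • u)) (𝓝[>] (0:ℝ)) (𝓝 (gR ts xh)) := by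
      have hCx : Continuous fun z : Eucl n => gR ts z :=
        hcont.comp (continuous_const.prodMk continuous_id)
      have hc2 : Continuous fun τ : ℝ => gR ts (xh + τ • u) :=
        hCx.comp (continuous_const.add (continuous_id.smul continuous_const))
      have := hc2.tendsto 0
      rw [show xh + (0:ℝ) • u = xh by simp] at this
      exact this.mono_left nhdsWithin_le_nhds
    refine ge_of_tendsto hlim ?_
    filter_upwards [self_mem_nhdsWithin] with τ hτ
    exact hstar τ hτ
  have hgrad := grad_nonneg_of_slopes (hdiff ts) u (fun τ hτ => by
    rw [hzero] at *
    have := hstar τ hτ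
    rw [hzero, sub_zero]
    positivity)
  exact absurd (hu ts hzero) (not_lt.2 hgrad)

end AuxFeas
section AuxKKT

variable {n p : ℕ} {T : Type*}

lemma convex_comb_pt {D : Set (Eucl n)} (hD : Convex ℝ D) {z₁ z₂ : Eucl n}
    (h₁ : z₁ ∈ D) (h₂ : z₂ ∈ D) {c₁ c₂ : ℝ} (hc₁ : 0 ≤ c₁) (hc₂ : 0 ≤ c₂) :
    ∃ z ∈ D, c₁ • z₁ + c₂ • z₂ = (c₁ + c₂) • z := by
  rcases eq_or_lt_of_le (add_nonneg hc₁ hc₂) with h | h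
  · have e1 : c₁ = 0 := by linarith
    have e2 : c₂ = 0 := by linarith
    exact ⟨z₁, h₁, by simp [e1, e2]⟩
  · refine ⟨((c₁+c₂)⁻¹ * c₁) • z₁ + ((c₁+c₂)⁻¹ * c₂) • z₂, ?_, ?_⟩
    · refine hD h₁ h₂ (by positivity) (by positivity) ?_
      field_simp
    · rw [smul_add, smul_smul, smul_smul]
      congr 2 <;> field_simp <;> ring

lemma kkt_convex (f : Fin p → Eucl n → ℝ) (g : T → Eucl n → EReal) (xh : Eucl n)
    (hDt : ∀ t ∈ activeIx g xh, Convex ℝ (subdiffE (g t) xh)) :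
    Convex ℝ {w | KKTPoint f g xh w} := by
  rintro w₁ hw₁ w₂ hw₂ a b ha hb hab
  rcases eq_or_lt_of_le ha with rfl | ha'
  · have hb1 : b = 1 := by linarith
    simpa [hb1] using hw₂
  rcases eq_or_lt_of_le hb with rfl | hb'
  · have ha1 : a = 1 := by linarith
    simpa [ha1] using hw₁
  obtain ⟨α₁, Ts₁, β₁, ξ₁, ζ₁, hα₁0, hα₁s, hTs₁, hβ₁, hξ₁, hζ₁, hsum₁⟩ := hw₁
  obtain ⟨α₂, Ts₂, β₂, ξ₂, ζ₂, hα₂0, hα₂s, hTs₂, hβ₂, hξ₂, hζ₂, hsum₂⟩ := hw₂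
  classical
  have Hξ : ∀ i, ∃ z ∈ subdiff (f i) xh,
      (a * α₁ i) • ξ₁ i + (b * α₂ i) • ξ₂ i = (a * α₁ i + b * α₂ i) • z :=
    fun i => convex_comb_pt (subdiff_convex _ _) (hξ₁ i) (hξ₂ i)
      (mul_nonneg ha (hα₁0 i)) (mul_nonneg hb (hα₂0 i))
  choose ξ' hξ'mem hξ'eq using Hξ
  set βe₁ : T → ℝ := fun t => if t ∈ Ts₁ then β₁ t else 0 with hβe₁
  set βe₂ : T → ℝ := fun t => if t ∈ Ts₂ then β₂ t else 0 with hβe₂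
  set ζe₁ : T → Eucl n := fun t => if t ∈ Ts₁ then ζ₁ t else ζ₂ t with hζe₁
  set ζe₂ : T → Eucl n := fun t => if t ∈ Ts₂ then ζ₂ t else ζ₁ t with hζe₂
  have hβe₁0 : ∀ t, 0 ≤ βe₁ t := by
    intro t; rw [hβe₁]; dsimp only; split
    · exact hβ₁ _ ‹_›
    · exact le_refl 0
  have hβe₂0 : ∀ t, 0 ≤ βe₂ t := by
    intro t; rw [hβe₂]; dsimp only; split
    · exact hβ₂ _ ‹_›
    · exact le_refl 0
  have hact : ∀ t ∈ Ts₁ ∪ Ts₂, t ∈ activeIx g xh := by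
    intro t ht
    rcases Finset.mem_union.1 ht with h | h
    · exact hTs₁ _ h
    · exact hTs₂ _ h
  have Hζ : ∀ t : T, ∃ z : Eucl n, t ∈ Ts₁ ∪ Ts₂ →
      z ∈ subdiffE (g t) xh ∧
      (a * βe₁ t) • ζe₁ t + (b * βe₂ t) • ζe₂ t = (a * βe₁ t + b * βe₂ t) • z := by
    intro t
    by_cases hmem : t ∈ Ts₁ ∪ Ts₂
    · have hz1 : ζe₁ t ∈ subdiffE (g t) xh := by
        rw [hζe₁]; dsimp only; split
        · exact hζ₁ _ ‹_›
        · rcases Finset.mem_union.1 hmem with h | h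
          · exact absurd h ‹_›
          · exact hζ₂ _ h
      have hz2 : ζe₂ t ∈ subdiffE (g t) xh := by
        rw [hζe₂]; dsimp only; split
        · exact hζ₂ _ ‹_›
        · rcases Finset.mem_union.1 hmem with h | h
          · exact hζ₁ _ h
          · exact absurd h ‹_›
      obtain ⟨z, hz, he⟩ := convex_comb_pt (hDt t (hact t hmem)) hz1 hz2
        (mul_nonneg ha (hβe₁0 t)) (mul_nonneg hb (hβe₂0 t))
      exact ⟨z, fun _ => ⟨hz, he⟩⟩
    · exact ⟨0, fun h => absurd h hmem⟩
  choose ζ' hζ' using Hζ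
  refine ⟨fun i => a * α₁ i + b * α₂ i, Ts₁ ∪ Ts₂, fun t => a * βe₁ t + b * βe₂ t, ξ', ζ',
    fun i => add_nonneg (mul_nonneg ha (hα₁0 i)) (mul_nonneg hb (hα₂0 i)), ?_, hact, ?_,
    hξ'mem, ?_, ?_⟩
  · rw [Finset.sum_add_distrib, ← Finset.mul_sum, ← Finset.mul_sum, hα₁s, hα₂s,
      mul_one, mul_one]
    exact hab
  · intro t _
    exact add_nonneg (mul_nonneg ha (hβe₁0 t)) (mul_nonneg hb (hβe₂0 t))
  · intro t ht
    exact (hζ' t ht).1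
  · have e₁ : ∑ t ∈ Ts₁ ∪ Ts₂, (a * βe₁ t + b * βe₂ t) • ζ' t
        = ∑ t ∈ Ts₁ ∪ Ts₂, ((a * βe₁ t) • ζe₁ t + (b * βe₂ t) • ζe₂ t) :=
      Finset.sum_congr rfl (fun t ht => ((hζ' t ht).2).symm)
    have e₂ : ∑ t ∈ Ts₁ ∪ Ts₂, (a * βe₁ t) • ζe₁ t = a • ∑ t ∈ Ts₁, β₁ t • ζ₁ t := by
      rw [Finset.smul_sum]
      rw [← Finset.sum_subset Finset.subset_union_left
        (fun t _ ht => by simp [hβe₁, ht])]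
      refine Finset.sum_congr rfl (fun t ht => ?_)
      rw [hβe₁, hζe₁]; dsimp only
      rw [if_pos ht, if_pos ht, mul_smul]
    have e₃ : ∑ t ∈ Ts₁ ∪ Ts₂, (b * βe₂ t) • ζe₂ t = b • ∑ t ∈ Ts₂, β₂ t • ζ₂ t := by
      rw [Finset.smul_sum]
      rw [← Finset.sum_subset Finset.subset_union_right
        (fun t _ ht => by simp [hβe₂, ht])]
      refine Finset.sum_congr rfl (fun t ht => ?_)
      rw [hβe₂, hζe₂]; dsimp only
      rw [if_pos ht, if_pos ht, mul_smul]
    have e₄ : ∑ i, (a * α₁ i + b * α₂ i) • ξ' i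
        = a • ∑ i, α₁ i • ξ₁ i + b • ∑ i, α₂ i • ξ₂ i := by
      rw [Finset.smul_sum, Finset.smul_sum, ← Finset.sum_add_distrib]
      refine Finset.sum_congr rfl (fun i _ => ?_)
      rw [← hξ'eq i, mul_smul, mul_smul]
    rw [e₁, Finset.sum_add_distrib, e₂, e₃, e₄, ← hsum₁, ← hsum₂]
    module

end AuxKKT
section StepA

variable {n p : ℕ} {T : Type*}

set_option maxHeartbeats 1000000 in
lemma stepA [TopologicalSpace T] [CompactSpace T]
    (hp : 1 ≤ p)
    (f : Fin p → Eucl n → ℝ) (g : T → Eucl n → EReal)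
    (hf : ∀ i, ConvexOn ℝ Set.univ (f i))
    (hgconv : ∀ t, ConvexE (g t))
    (xh : Eucl n) (hxS : xh ∈ feasSet g)
    (gR : T → Eucl n → ℝ) (hgR : ∀ t x, g t x = ((gR t x : ℝ) : EReal))
    (hcont : Continuous fun q : T × Eucl n => gR q.1 q.2)
    (hdiff : ∀ t, DifferentiableAt ℝ (gR t) xh)
    {ν : ℝ} (hν : 0 < ν) (hiso : IsolatedEff f (feasSet g) xh ν)
    (d₀ : Eucl n) (hd₀ : d₀ ∈ strictNegPolar (GSet g xh))
    (w : Eucl n) (hw : ‖w‖ < ν) :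
    w ∈ closure {w' | KKTPoint f g xh w'} := by
  classical
  set C := {w' | KKTPoint f g xh w'} with hC
  have hbase : ∀ i, ∃ ξ, ξ ∈ subdiff (f i) xh := fun i =>
    ((exists_subgrad (hf i) xh 0).imp (fun ξ h => h.1))
  choose ξ₀ hξ₀ using hbase
  have hCmem : ∀ (i : Fin p) (ξ : Eucl n), ξ ∈ subdiff (f i) xh →
      ∀ (s : Finset T) (βf : T → ℝ) (ζf : T → Eucl n),
      (∀ t ∈ s, t ∈ activeIx g xh) → (∀ t ∈ s, 0 ≤ βf t) →
      (∀ t ∈ s, ζf t ∈ subdiffE (g t) xh) →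
      (ξ + ∑ t ∈ s, βf t • ζf t) ∈ C := by
    intro i ξ hξ s βf ζf hs hβ hζ
    refine ⟨fun j => if j = i then 1 else 0, s, βf,
      fun j => if j = i then ξ else ξ₀ j, ζf, ?_, ?_, hs, hβ, ?_, hζ, ?_⟩
    · intro j; dsimp only; split <;> norm_num
    · simp
    · intro j; dsimp only; split
      · subst ‹j = i›; exact hξ
      · exact hξ₀ j
    · congr 1
      have he : ∀ j : Fin p, (if j = i then (1:ℝ) else 0) • (if j = i then ξ else ξ₀ j)
          = if j = i then ξ else 0 := by
        intro j; split <;> simp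
      rw [Finset.sum_congr rfl (fun j _ => he j), Finset.sum_ite_eq' Finset.univ i fun _ => ξ]
      simp
  set i0 : Fin p := ⟨0, hp⟩ with hi0
  set w₀ : Eucl n := ξ₀ i0 with hw₀def
  have hw₀ : w₀ ∈ C := by
    have := hCmem i0 (ξ₀ i0) (hξ₀ i0) ∅ 0 0 (by simp) (by simp) (by simp)
    simpa using this
  by_contra hwC
  have hDt : ∀ t ∈ activeIx g xh, Convex ℝ (subdiffE (g t) xh) := by
    intro t _
    rw [subdiffE_eq_subdiff g gR hgR]
    exact subdiff_convex _ _
  obtain ⟨φ, u₀, hφlt, hφw⟩ :=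
    geometric_hahn_banach_closed_point
      ((kkt_convex f g xh hDt).closure) isClosed_closure hwC
  set d : Eucl n := (InnerProductSpace.toDual ℝ (Eucl n)).symm φ with hd
  have hdip : ∀ v : Eucl n, ⟪d, v⟫ = φ v := fun v => InnerProductSpace.toDual_symm_apply
  have hFlt : ∀ i, ∀ ξ ∈ subdiff (f i) xh, φ ξ < u₀ := by
    intro i ξ hξ
    refine hφlt _ (subset_closure ?_)
    have := hCmem i ξ hξ ∅ 0 0 (by simp) (by simp) (by simp)
    simpa [hC] using this
  have hGle : ∀ t ∈ activeIx g xh, ∀ ζ ∈ subdiffE (g t) xh, φ ζ ≤ 0 := by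
    intro t ht ζ hζ
    by_contra hpos
    push_neg at hpos
    have hw₀lt : φ w₀ < u₀ := hφlt _ (subset_closure hw₀)
    set β : ℝ := (u₀ - φ w₀) / φ ζ with hβdef
    have hβpos : 0 < β := div_pos (by linarith) hpos
    have hmem : (w₀ + β • ζ) ∈ C := by
      have := hCmem i0 (ξ₀ i0) (hξ₀ i0) {t} (fun _ => β) (fun _ => ζ)
        (by simpa using ht) (fun _ _ => hβpos.le) (by simpa using hζ)
      simpa using this
    have hlt := hφlt _ (subset_closure hmem)
    rw [map_add, map_smul] at hlt
    have : β * φ ζ = u₀ - φ w₀ := by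
      rw [hβdef]; field_simp
    simp only [smul_eq_mul] at hlt
    linarith
  have hw₀lt : φ w₀ < u₀ := hφlt _ (subset_closure hw₀)
  have hdne : d ≠ 0 := by
    intro h
    have h1 := hdip w₀
    have h2 := hdip w
    rw [h] at h1 h2
    simp only [inner_zero_left] at h1 h2
    have := hφw
    linarith
  have hdnorm : 0 < ‖d‖ := norm_pos_iff.2 hdne
  have hu₀lt : u₀ < ν * ‖d‖ := by
    have h1 : φ w ≤ ‖d‖ * ‖w‖ := by
      rw [← hdip]; exact real_inner_le_norm d w
    have h2 : ‖d‖ * ‖w‖ < ‖d‖ * ν := by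
      exact mul_lt_mul_of_pos_left hw hdnorm
    calc u₀ < φ w := hφw
      _ ≤ ‖d‖ * ‖w‖ := h1
      _ < ‖d‖ * ν := h2
      _ = ν * ‖d‖ := mul_comm _ _
  set δ : ℝ := ν * ‖d‖ - u₀ with hδdef
  have hδpos : 0 < δ := by rw [hδdef]; linarith
  -- uniform bound on subgradients
  set m : Fin p → Fin n → ℝ := fun i j =>
    max (f i (xh + EuclideanSpace.single j 1) - f i xh)
        (f i (xh - EuclideanSpace.single j 1) - f i xh) with hm
  set Mi : Fin p → ℝ := fun i => Real.sqrt (∑ j, (m i j)^2) with hMi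
  have hnormb : ∀ i, ∀ ξ ∈ subdiff (f i) xh, ‖ξ‖ ≤ Mi i := by
    intro i ξ hξ
    have hcoord : ∀ j, |ξ j| ≤ m i j := by
      intro j
      have h1 := hξ (xh + EuclideanSpace.single j 1)
      have h2 := hξ (xh - EuclideanSpace.single j 1)
      have e1 : xh + EuclideanSpace.single j 1 - xh = EuclideanSpace.single j (1:ℝ) := by abel
      have e2 : xh - EuclideanSpace.single j 1 - xh = -EuclideanSpace.single j (1:ℝ) := by abel
      rw [e1] at h1
      rw [e2] at h2
      rw [inner_neg_right] at h2
      have hip : ⟪ξ, EuclideanSpace.single j (1:ℝ)⟫ = ξ j := by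
        rw [EuclideanSpace.inner_single_right]
        simp
      rw [hip] at h1 h2
      rw [abs_le]
      constructor
      · have : -(ξ j) ≤ f i (xh - EuclideanSpace.single j 1) - f i xh := by linarith
        have h3 := le_max_right (f i (xh + EuclideanSpace.single j 1) - f i xh)
          (f i (xh - EuclideanSpace.single j 1) - f i xh)
        rw [hm]; dsimp only; linarith
      · have : ξ j ≤ f i (xh + EuclideanSpace.single j 1) - f i xh := by linarith
        have h3 := le_max_left (f i (xh + EuclideanSpace.single j 1) - f i xh)
          (f i (xh - EuclideanSpace.single j 1) - f i xh)
        rw [hm]; dsimp only; linarith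
    rw [EuclideanSpace.norm_eq, hMi]
    apply Real.sqrt_le_sqrt
    apply Finset.sum_le_sum
    intro j _
    have := hcoord j
    have h4 : ‖ξ j‖ = |ξ j| := rfl
    rw [h4]
    nlinarith [abs_nonneg (ξ j)]
  set K : ℝ := ∑ i, Mi i * ‖d₀‖ with hK
  have hKb : ∀ i, ∀ ξ ∈ subdiff (f i) xh, ⟪ξ, d₀⟫ ≤ K := by
    intro i ξ hξ
    calc ⟪ξ, d₀⟫ ≤ ‖ξ‖ * ‖d₀‖ := real_inner_le_norm ξ d₀
      _ ≤ Mi i * ‖d₀‖ := mul_le_mul_of_nonneg_right (hnormb i ξ hξ) (norm_nonneg _)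
      _ ≤ K := Finset.single_le_sum
          (f := fun i => Mi i * ‖d₀‖)
          (fun i _ => mul_nonneg (Real.sqrt_nonneg _) (norm_nonneg _)) (Finset.mem_univ i)
  set ε : ℝ := δ / (2 * (max K 0 + ν * ‖d₀‖ + 1)) with hεdef
  have hden : 0 < max K 0 + ν * ‖d₀‖ + 1 := by positivity
  have hεpos : 0 < ε := by rw [hεdef]; positivity
  have hεbound : ε * K + ε * (ν * ‖d₀‖) ≤ δ / 2 := by
    have h1 : ε * (max K 0 + ν * ‖d₀‖ + 1) = δ / 2 := by
      rw [hεdef]; field_simp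
    have h2 : K ≤ max K 0 := le_max_left _ _
    nlinarith [hεpos.le, mul_le_mul_of_nonneg_left h2 hεpos.le]
  set u₁ : Eucl n := d + ε • d₀ with hu₁
  have hnu₁ : ν * ‖d‖ - ν * (ε * ‖d₀‖) ≤ ν * ‖u₁‖ := by
    have h1 : ‖d‖ ≤ ‖u₁‖ + ε * ‖d₀‖ := by
      have : d = u₁ - ε • d₀ := by rw [hu₁]; abel
      rw [this]
      calc ‖u₁ - ε • d₀‖ ≤ ‖u₁‖ + ‖ε • d₀‖ := norm_sub_le _ _
        _ = ‖u₁‖ + ε * ‖d₀‖ := by rw [norm_smul, Real.norm_eq_abs, abs_of_pos hεpos]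
    have h2 := mul_le_mul_of_nonneg_left h1 hν.le
    rw [mul_add] at h2
    linarith
  have hup : ∀ i, ∀ ξ ∈ subdiff (f i) xh, ⟪ξ, u₁⟫ < ν * ‖u₁‖ := by
    intro i ξ hξ
    have h1 : ⟪ξ, u₁⟫ = ⟪ξ, d⟫ + ε * ⟪ξ, d₀⟫ := by
      rw [hu₁, inner_add_right, real_inner_smul_right]
    have h2 : ⟪ξ, d⟫ < u₀ := by
      rw [real_inner_comm, hdip]; exact hFlt i ξ hξ
    have h3 : ε * ⟪ξ, d₀⟫ ≤ ε * K := mul_le_mul_of_nonneg_left (hKb i ξ hξ) hεpos.le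
    rw [h1]
    have h5 : u₀ = ν * ‖d‖ - δ := by rw [hδdef]; ring
    linarith [hnu₁, hεbound]
  have hgradlt : ∀ t, gR t xh = 0 → ⟪gradient (gR t) xh, u₁⟫ < 0 := by
    intro t hact0
    have hactm : t ∈ activeIx g xh := (mem_activeIx_iff g gR hgR t xh).2 hact0
    have hmemE : gradient (gR t) xh ∈ subdiffE (g t) xh := by
      rw [subdiffE_eq_subdiff g gR hgR]
      exact grad_mem_subdiff (gR_convexOn g gR hgR hgconv t) (hdiff t)
    have h1 : φ (gradient (gR t) xh) ≤ 0 := hGle t hactm _ hmemE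
    have h2 : ⟪gradient (gR t) xh, d₀⟫ < 0 :=
      hd₀ _ (Set.mem_biUnion hactm hmemE)
    have h3 : ⟪gradient (gR t) xh, u₁⟫
        = ⟪gradient (gR t) xh, d⟫ + ε * ⟪gradient (gR t) xh, d₀⟫ := by
      rw [hu₁, inner_add_right, real_inner_smul_right]
    have h4 : ⟪gradient (gR t) xh, d⟫ ≤ 0 := by
      rw [real_inner_comm, hdip]; exact h1
    have h5 : ε * ⟪gradient (gR t) xh, d₀⟫ < 0 := mul_neg_of_pos_of_neg hεpos h2
    rw [h3]; linarith
  obtain ⟨τ₀, hτ₀, hτfeas⟩ := feas_dir g gR hgR hgconv hcont xh hxS hdiff u₁ hgradlt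
  have hIdx : ∃ i, ∀ τ : ℝ, 0 < τ → ν * ‖u₁‖ ≤ slp (f i) xh u₁ τ := by
    have hbig : ∃ i, ∀ τ : ℝ, 0 < τ → τ ≤ τ₀ → ν * ‖u₁‖ ≤ slp (f i) xh u₁ τ := by
      by_contra hno
      push_neg at hno
      choose τi hτi0 hτile hτilt using hno
      have hne : (Finset.univ : Finset (Fin p)).Nonempty := ⟨i0, Finset.mem_univ _⟩
      set τs := Finset.univ.inf' hne τi with hτs
      have hτs0 : 0 < τs := (Finset.lt_inf'_iff hne).2 (fun i _ => hτi0 i)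
      have hτsle : τs ≤ τ₀ :=
        le_trans (Finset.inf'_le _ (Finset.mem_univ i0)) (hτile i0)
      have hfeasx := hτfeas τs hτs0 hτsle
      obtain ⟨i, hi⟩ := hiso _ hfeasx
      have hnorm : ‖xh + τs • u₁ - xh‖ = τs * ‖u₁‖ := by
        simp [norm_smul, abs_of_pos hτs0]
      rw [hnorm] at hi
      have hslp : ν * ‖u₁‖ ≤ slp (f i) xh u₁ τs := by
        rw [slp, le_div_iff₀ hτs0]
        nlinarith [hi]
      have hcontr := lt_of_le_of_lt
        (le_trans hslp (slp_mono (hf i) xh u₁ hτs0 (Finset.inf'_le _ (Finset.mem_univ i))))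
        (hτilt i)
      exact lt_irrefl _ hcontr
    obtain ⟨i, hi⟩ := hbig
    refine ⟨i, fun τ hτ => ?_⟩
    rcases le_or_gt τ τ₀ with h | h
    · exact hi τ hτ h
    · exact le_trans (hi τ₀ hτ₀ le_rfl) (slp_mono (hf i) xh u₁ hτ₀ h.le)
  obtain ⟨i, hi⟩ := hIdx
  obtain ⟨ξ, hξmem, hξdd⟩ := exists_subgrad (hf i) xh u₁
  have h1 : ν * ‖u₁‖ ≤ ddf (f i) xh u₁ := le_ddf _ _ (fun t ht => hi t ht)
  exact absurd (hup i ξ hξmem) (not_lt.2 (le_trans h1 hξdd))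

end StepA

variable {n p : ℕ} {T : Type*}

/-- If `(P)` is continuous, `x̂ ∈ S` is an isolated efficient solution of
`(P)`, all constraints are continuously differentiable around `x̂`, and MFCQ holds at `x̂`,
then the perturbed KKT condition holds at `x̂`. -/
theorem stmt12
    [TopologicalSpace T] [CompactSpace T] [T2Space T]
    (hn : 1 ≤ n) (hp : 1 ≤ p)
    (f : Fin p → Eucl n → ℝ) (g : T → Eucl n → EReal)
    (hf : ∀ i, ConvexOn ℝ Set.univ (f i))
    (hgconv : ∀ t, ConvexE (g t))
    (hgproper : ∀ t, ProperE (g t))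
    (hglsc : ∀ t, LowerSemicontinuous (g t))
    (xh : Eucl n) (hxS : xh ∈ feasSet g)
    (gR : T → Eucl n → ℝ) (hgR : ∀ t x, g t x = ((gR t x : ℝ) : EReal))
    (hcont : Continuous fun q : T × Eucl n => gR q.1 q.2)
    (hsmooth : ∀ t, ∃ U ∈ 𝓝 xh, ContDiffOn ℝ 1 (gR t) U)
    (hiso : ∃ ν : ℝ, 0 < ν ∧ IsolatedEff f (feasSet g) xh ν)
    (hmfcq : MFCQ g xh) :
    ∃ ν : ℝ, 0 < ν ∧ PerturbedKKT f g xh ν := by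
  classical
  obtain ⟨ν, hν, hiso⟩ := hiso
  obtain ⟨hGne, d₀, hd₀⟩ := hmfcq
  have hdiff : ∀ t, DifferentiableAt ℝ (gR t) xh := by
    intro t
    obtain ⟨U, hU, hCd⟩ := hsmooth t
    exact (hCd.contDiffAt hU).differentiableAt one_ne_zero
  set C := {w' : Eucl n | KKTPoint f g xh w'} with hCdef
  have hDt : ∀ t ∈ activeIx g xh, Convex ℝ (subdiffE (g t) xh) := by
    intro t _
    rw [subdiffE_eq_subdiff g gR hgR]
    exact subdiff_convex _ _
  have hCconv : Convex ℝ C := kkt_convex f g xh hDt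
  have hball : Metric.ball (0 : Eucl n) ν ⊆ closure C := by
    intro w hwb
    have hwn : ‖w‖ < ν := by simpa [Metric.mem_ball, dist_zero_right] using hwb
    exact stepA hp f g hf hgconv xh hxS gR hgR hcont hdiff hν hiso d₀ hd₀ w hwn
  have hspan : affineSpan ℝ C = ⊤ := by
    have h1 : affineSpan ℝ (closure C) = ⊤ := by
      apply affineSpan_eq_top_of_nonempty_interior
      exact ⟨0, interior_mono (hball.trans (subset_convexHull ℝ _))
        (by rw [IsOpen.interior_eq Metric.isOpen_ball]; exact Metric.mem_ball_self hν)⟩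
    have hcl : IsClosed ((affineSpan ℝ C : AffineSubspace ℝ (Eucl n)) : Set (Eucl n)) :=
      (affineSpan ℝ C).closed_of_finiteDimensional
    have h2 : closure C ⊆ (affineSpan ℝ C : Set (Eucl n)) :=
      closure_minimal (subset_affineSpan ℝ C) hcl
    have h3 : affineSpan ℝ (closure C) ≤ affineSpan ℝ C := affineSpan_le.2 h2
    exact le_antisymm le_top (h1 ▸ h3)
  obtain ⟨c₀, hc₀⟩ := (hCconv.interior_nonempty_iff_affineSpan_eq_top).2 hspan
  refine ⟨ν/2, by positivity, ?_⟩
  intro w hwn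
  set δ : ℝ := ν / (4 * (‖c₀‖ + ν)) with hδ
  have hc0ν : 0 < ‖c₀‖ + ν := by positivity
  have hδpos : 0 < δ := by rw [hδ]; positivity
  have hδprod : δ * (‖c₀‖ + ν) = ν/4 := by
    rw [hδ]; field_simp
  have hδlt : δ < 1 := by
    rw [hδ, div_lt_one (by positivity)]
    nlinarith [norm_nonneg c₀]
  have h1δ : 0 < 1 - δ := by linarith
  set y : Eucl n := (1 - δ)⁻¹ • (w - δ • c₀) with hy
  have hyn : ‖y‖ < ν := by
    have h1 : ‖w - δ • c₀‖ ≤ ‖w‖ + δ * ‖c₀‖ := by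
      calc ‖w - δ • c₀‖ ≤ ‖w‖ + ‖δ • c₀‖ := norm_sub_le _ _
        _ = ‖w‖ + δ * ‖c₀‖ := by rw [norm_smul, Real.norm_eq_abs, abs_of_pos hδpos]
    have h2 : ‖y‖ = (1 - δ)⁻¹ * ‖w - δ • c₀‖ := by
      rw [hy, norm_smul, Real.norm_eq_abs, abs_of_pos (by positivity : (0:ℝ) < (1-δ)⁻¹)]
    rw [h2]
    rw [inv_mul_lt_iff₀ h1δ]
    nlinarith [h1, hδprod, hν, hwn]
  have hyC : y ∈ closure C := hball (by simpa [Metric.mem_ball, dist_zero_right] using hyn)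
  have hcombo : δ • c₀ + (1 - δ) • y = w := by
    rw [hy, smul_inv_smul₀ h1δ.ne']
    abel
  have hmem := hCconv.combo_interior_closure_mem_interior hc₀ hyC hδpos h1δ.le
    (by ring : δ + (1 - δ) = 1)
  rw [hcombo] at hmem
  exact (interior_subset hmem : w ∈ C)

end MOSIP
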